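/- arXiv:1505.02566 — 2 statements merged into one kernel-verified Lean document; each statement's English description precedes it below -/
import Mathlib

section
/- With the abstract structure ‖y‖_Z² = ‖Ay‖² + η‖By‖², the unique solution (y,λ) of the mixed problem a(y,ȳ) + b(ȳ,λ) = l(ȳ) for all ȳ, b(y,λ̄) = 0 for all λ̄, with l(ȳ) = ⟨g, Aȳ⟩_{H₁} for a fixed g ∈ H₁, satisfies ‖y‖_Z ≤ ‖g‖_{H₁} and ‖λ‖_{H₂} ≤ 2√(C+η) ‖g‖_{H₁}, where (C+η)^{−1/2} is a lower bound for the inf-sup constant. -/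
/-- Estimates (2.8): the solution (y,λ) of the mixed problem with data
l(yb) = ⟨g, Ayb⟩ satisfies ‖y‖_Z ≤ ‖g‖ and ‖λ‖ ≤ 2√(C+η)‖g‖. -/
theorem stmt_6 {Z H₁ H₂ : Type*} [NormedAddCommGroup Z] [InnerProductSpace ℝ Z]
    [NormedAddCommGroup H₁] [InnerProductSpace ℝ H₁]
    [NormedAddCommGroup H₂] [InnerProductSpace ℝ H₂]
    (A : Z →ₗ[ℝ] H₁) (B : Z →ₗ[ℝ] H₂) (η C : ℝ) (hη : 0 < η) (hC : 0 ≤ C)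
    (hnorm : ∀ y : Z, ‖y‖ ^ 2 = ‖A y‖ ^ 2 + η * ‖B y‖ ^ 2)
    (hinv : ∀ μ : H₂, ∃ y₀ : Z, B y₀ = μ ∧ ‖A y₀‖ ≤ Real.sqrt C * ‖μ‖)
    (g : H₁) (y : Z) (lam : H₂)
    (heq1 : ∀ yb : Z,
      (inner ℝ (A y) (A yb) : ℝ) + (inner ℝ (B yb) lam : ℝ) = (inner ℝ g (A yb) : ℝ))
    (heq2 : ∀ μ : H₂, (inner ℝ (B y) μ : ℝ) = 0) :
    ‖y‖ ≤ ‖g‖ ∧ ‖lam‖ ≤ 2 * Real.sqrt (C + η) * ‖g‖ := by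
  have hBy : B y = 0 := by
    have := heq2 (B y)
    rwa [inner_self_eq_zero] at this
  -- ‖A y‖ ≤ ‖g‖
  have h1 := heq1 y
  rw [hBy, inner_zero_left, real_inner_self_eq_norm_sq, add_zero] at h1
  have hcs : (inner ℝ g (A y) : ℝ) ≤ ‖g‖ * ‖A y‖ := real_inner_le_norm g (A y)
  have hAy : ‖A y‖ ≤ ‖g‖ := by
    rcases eq_or_lt_of_le (norm_nonneg (A y)) with h | h
    · rw [← h]; exact norm_nonneg g
    · nlinarith [h1, hcs]
  constructor
  · have hy2 : ‖y‖ ^ 2 = ‖A y‖ ^ 2 := by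
      rw [hnorm y, hBy, norm_zero]; ring
    nlinarith [norm_nonneg y, norm_nonneg (A y), norm_nonneg g]
  · obtain ⟨y₀, hBy₀, hAy₀⟩ := hinv lam
    have h2 := heq1 y₀
    rw [hBy₀, real_inner_self_eq_norm_sq] at h2
    have hcs1 : -(‖A y‖ * ‖A y₀‖) ≤ (inner ℝ (A y) (A y₀) : ℝ) :=
      (abs_le.mp (abs_real_inner_le_norm (A y) (A y₀))).1
    have hcs2 : (inner ℝ g (A y₀) : ℝ) ≤ ‖g‖ * ‖A y₀‖ := real_inner_le_norm g (A y₀)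
    have hlam2 : ‖lam‖ ^ 2 ≤ 2 * ‖g‖ * (Real.sqrt C * ‖lam‖) := by
      have : ‖lam‖ ^ 2 ≤ (‖g‖ + ‖A y‖) * ‖A y₀‖ := by nlinarith
      have h3 : (‖g‖ + ‖A y‖) * ‖A y₀‖ ≤ 2 * ‖g‖ * (Real.sqrt C * ‖lam‖) := by
        have hg0 : 0 ≤ ‖g‖ := norm_nonneg g
        nlinarith [norm_nonneg (A y₀), Real.sqrt_nonneg C, norm_nonneg lam]
      linarith
    have hsq : Real.sqrt C ≤ Real.sqrt (C + η) :=
      Real.sqrt_le_sqrt (by linarith)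
    rcases eq_or_lt_of_le (norm_nonneg lam) with h | h
    · rw [← h]
      positivity
    · have : ‖lam‖ ≤ 2 * Real.sqrt C * ‖g‖ := by nlinarith
      have : 2 * Real.sqrt C * ‖g‖ ≤ 2 * Real.sqrt (C + η) * ‖g‖ := by
        nlinarith [norm_nonneg g]
      linarith [‹‖lam‖ ≤ 2 * Real.sqrt C * ‖g‖›]
end

section
/- Let Z be a real Hilbert space, a_r : Z × Z → ℝ a continuous symmetric coercive bilinear form (a_r(y,y) ≥ α‖y‖_Z² with α > 0), M a Hilbert space, and B : Z → M a bounded linear map with b(y,λ) = ⟨By,λ⟩_M. Define P_r : M → M by P_r λ = B y_λ where y_λ ∈ Z is the unique solution of a_r(y_λ, ȳ) = b(ȳ, λ) for all ȳ ∈ Z. Then P_r is a bounded, symmetric (self-adjoint), positive semidefinite linear operator on M, and ⟨P_r λ, λ'⟩_M = a_r(y_λ, y_{λ'}) for all λ, λ' ∈ M. -/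
/-- The dual operator P_r λ = B y_λ, where a_r(y_λ,yb) = ⟨Byb,λ⟩, is a bounded,
self-adjoint, positive semidefinite linear operator with
⟨P_r λ, λ'⟩ = a_r(y_λ, y_{λ'}). -/
theorem stmt_9 {Z M : Type*} [NormedAddCommGroup Z] [InnerProductSpace ℝ Z]
    [NormedAddCommGroup M] [InnerProductSpace ℝ M]
    (a_r : Z →L[ℝ] Z →L[ℝ] ℝ)
    (hsymm : ∀ y z : Z, a_r y z = a_r z y)
    (α : ℝ) (hα : 0 < α)
    (hcoer : ∀ y : Z, α * ‖y‖ ^ 2 ≤ a_r y y)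
    (B : Z →L[ℝ] M)
    (yof : M → Z)
    (hyof : ∀ (μ : M) (yb : Z), a_r (yof μ) yb = (inner ℝ (B yb) μ : ℝ)) :
    IsLinearMap ℝ (fun μ => B (yof μ)) ∧
    (∃ K : ℝ, ∀ μ : M, ‖B (yof μ)‖ ≤ K * ‖μ‖) ∧
    (∀ μ μ' : M, (inner ℝ (B (yof μ)) μ' : ℝ) = (inner ℝ μ (B (yof μ')) : ℝ)) ∧
    (∀ μ : M, 0 ≤ (inner ℝ (B (yof μ)) μ : ℝ)) ∧
    (∀ μ μ' : M, (inner ℝ (B (yof μ)) μ' : ℝ) = a_r (yof μ) (yof μ')) := by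
  -- uniqueness from coercivity
  have huniq : ∀ y y' : Z, (∀ yb : Z, a_r y yb = a_r y' yb) → y = y' := by
    intro y y' h
    have h1 : a_r (y - y') (y - y') = 0 := by
      simp only [map_sub, ContinuousLinearMap.sub_apply]
      linarith [h y, h y']
    have h2 := hcoer (y - y')
    rw [h1] at h2
    have : ‖y - y'‖ ^ 2 ≤ 0 := by nlinarith
    have : ‖y - y'‖ = 0 := by nlinarith [sq_nonneg ‖y - y'‖, norm_nonneg (y - y')]
    rwa [norm_sub_eq_zero_iff] at this
  -- key identity (last bullet), proved first
  have hkey : ∀ μ μ' : M, (inner ℝ (B (yof μ)) μ' : ℝ) = a_r (yof μ) (yof μ') := by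
    intro μ μ'
    rw [← hyof μ' (yof μ), hsymm]
  -- linearity of yof
  have hlin : ∀ μ μ' : M, yof (μ + μ') = yof μ + yof μ' := by
    intro μ μ'
    refine huniq _ _ fun yb => ?_
    rw [hyof, map_add, ContinuousLinearMap.add_apply, hyof, hyof, inner_add_right]
  have hsmul : ∀ (c : ℝ) (μ : M), yof (c • μ) = c • yof μ := by
    intro c μ
    refine huniq _ _ fun yb => ?_
    rw [hyof, map_smul, ContinuousLinearMap.smul_apply, hyof,
      real_inner_smul_right]
    rfl
  refine ⟨⟨fun μ μ' => by rw [hlin, map_add], fun c μ => by rw [hsmul, map_smul]⟩,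
    ?_, ?_, ?_, hkey⟩
  · -- boundedness
    refine ⟨‖B‖ ^ 2 / α, fun μ => ?_⟩
    have hy : ‖yof μ‖ ≤ ‖B‖ * ‖μ‖ / α := by
      have h1 : α * ‖yof μ‖ ^ 2 ≤ a_r (yof μ) (yof μ) := hcoer _
      have h2 : a_r (yof μ) (yof μ) = (inner ℝ (B (yof μ)) μ : ℝ) := hyof _ _
      have h3 : (inner ℝ (B (yof μ)) μ : ℝ) ≤ ‖B (yof μ)‖ * ‖μ‖ :=
        real_inner_le_norm _ _
      have h4 : ‖B (yof μ)‖ ≤ ‖B‖ * ‖yof μ‖ := B.le_opNorm _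
      have h5 : α * ‖yof μ‖ ^ 2 ≤ ‖B‖ * ‖yof μ‖ * ‖μ‖ := by
        nlinarith [norm_nonneg μ, norm_nonneg (B (yof μ))]
      rw [le_div_iff₀ hα]
      nlinarith [norm_nonneg (yof μ), norm_nonneg μ, norm_nonneg B,
        mul_nonneg (norm_nonneg B) (norm_nonneg μ)]
    calc ‖B (yof μ)‖ ≤ ‖B‖ * ‖yof μ‖ := B.le_opNorm _
      _ ≤ ‖B‖ * (‖B‖ * ‖μ‖ / α) := by
          exact mul_le_mul_of_nonneg_left hy (norm_nonneg B)
      _ = ‖B‖ ^ 2 / α * ‖μ‖ := by ring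
  · intro μ μ'
    rw [hkey, hsymm, ← hkey, real_inner_comm]
  · intro μ
    rw [hkey]
    have := hcoer (yof μ)
    nlinarith [sq_nonneg ‖yof μ‖]
end
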